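/- For every positive integer a, the triple sum over ordered factorizations a = δ₁ δ₂ δ₃ (positive integers) of φ(δ₂ δ₃) φ(δ₃) / (δ₂ δ₃) equals a. -/
import Mathlib


open Finset

theorem stmt13 (a : ℕ) (ha : 0 < a) :
    ∑ t ∈ (a.divisors ×ˢ a.divisors ×ˢ a.divisors).filter
        (fun t : ℕ × ℕ × ℕ => t.1 * t.2.1 * t.2.2 = a),
      ((Nat.totient (t.2.1 * t.2.2) : ℚ) * (Nat.totient t.2.2 : ℚ))
        / ((t.2.1 : ℚ) * (t.2.2 : ℚ))
      = a := by
  have key : ∑ t ∈ (a.divisors ×ˢ a.divisors ×ˢ a.divisors).filter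
        (fun t : ℕ × ℕ × ℕ => t.1 * t.2.1 * t.2.2 = a),
      ((Nat.totient (t.2.1 * t.2.2) : ℚ) * (Nat.totient t.2.2 : ℚ))
        / ((t.2.1 : ℚ) * (t.2.2 : ℚ))
      = ∑ p ∈ a.divisors.sigma (fun d => d.divisors),
          ((Nat.totient p.1 : ℚ) * (Nat.totient p.2 : ℚ)) / (p.1 : ℚ) := by
    apply Finset.sum_nbij' (i := fun t : ℕ × ℕ × ℕ => (⟨t.2.1 * t.2.2, t.2.2⟩ : Σ _ : ℕ, ℕ))
      (j := fun p : Σ _ : ℕ, ℕ => (a / p.1, p.1 / p.2, p.2))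
    · rintro ⟨x, y, z⟩ ht
      simp only [Finset.mem_filter, Finset.mem_product, Nat.mem_divisors] at ht
      obtain ⟨⟨⟨hx, _⟩, ⟨hy, _⟩, ⟨hz, _⟩⟩, heq⟩ := ht
      simp only [Finset.mem_sigma, Nat.mem_divisors]
      refine ⟨⟨⟨x, by rw [← heq]; ring⟩, ha.ne'⟩, ⟨y, mul_comm _ _⟩, ?_⟩
      intro h0
      rw [mul_assoc, h0, mul_zero] at heq
      omega
    · rintro ⟨d, e⟩ hp
      simp only [Finset.mem_sigma, Nat.mem_divisors] at hp
      obtain ⟨⟨hd, _⟩, he, hd0⟩ := hp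
      simp only [Finset.mem_filter, Finset.mem_product, Nat.mem_divisors]
      exact ⟨⟨⟨Nat.div_dvd_of_dvd hd, ha.ne'⟩, ⟨(Nat.div_dvd_of_dvd he).trans hd, ha.ne'⟩,
        he.trans hd, ha.ne'⟩, by rw [mul_assoc, Nat.div_mul_cancel he, Nat.div_mul_cancel hd]⟩
    · rintro ⟨x, y, z⟩ ht
      simp only [Finset.mem_filter, Finset.mem_product, Nat.mem_divisors] at ht
      obtain ⟨⟨⟨hx, _⟩, ⟨hy, _⟩, ⟨hz, hz0⟩⟩, heq⟩ := ht
      have hy' : 0 < y := Nat.pos_of_dvd_of_pos hy ha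
      have hz' : 0 < z := Nat.pos_of_dvd_of_pos hz ha
      rw [mul_assoc] at heq
      have h1 : x * (y * z) / (y * z) = x := Nat.mul_div_cancel _ (by positivity)
      have h2 : y * z / z = y := Nat.mul_div_cancel _ hz'
      simp only [← heq, h1, h2]
    · rintro ⟨d, e⟩ hp
      simp only [Finset.mem_sigma, Nat.mem_divisors] at hp
      obtain ⟨⟨hd, _⟩, he, hd0⟩ := hp
      simp only [Sigma.mk.inj_iff]
      exact ⟨Nat.div_mul_cancel he, heq_of_eq rfl⟩
    · rintro ⟨x, y, z⟩ ht
      simp only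
      push_cast
      ring
  rw [key, Finset.sum_sigma]
  have h2 : ∀ d ∈ a.divisors, ∑ e ∈ d.divisors,
      ((Nat.totient d : ℚ) * (Nat.totient e : ℚ)) / (d : ℚ) = (Nat.totient d : ℚ) := by
    intro d hd
    have hd0 : 0 < d := Nat.pos_of_mem_divisors hd
    rw [← Finset.sum_div, ← Finset.mul_sum, ← Nat.cast_sum, Nat.sum_totient,
      mul_div_assoc, div_self (by exact_mod_cast hd0.ne'), mul_one]
  rw [Finset.sum_congr rfl h2, ← Nat.cast_sum, Nat.sum_totient]
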